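/- Define Minkowskian angles on the plane ℝ^{1,1} by cosh(θ) = ⟨u,v⟩/(‖u‖‖v‖) with ‖u‖ = sqrt(⟨u,u⟩) ∈ ℝ⁺ ∪ iℝ⁺ and θ = φ - iϕ with ϕ ∈ {0, π/2, π, 3π/2} according to the light-cone region (R,U,L,B) containing the vector. Then these angles are additive: for positively oriented non-null vectors u, v, w (none on the light cone), θ_{uw} = θ_{uv} + θ_{vw}. -/

import Mathlib

open Real Complex

noncomputable section

/-- The Minkowski form on the plane `ℝ^{1,1}`: `⟨x,y⟩ = x₀y₀ - x₁y₁`. -/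
def Q (x y : Fin 2 → ℝ) : ℝ := x 0 * y 0 - x 1 * y 1

/-- The complex Minkowski norm `‖u‖ = sqrt⟨u,u⟩ ∈ ℝ⁺ ∪ iℝ⁺`. -/
def mnorm (u : Fin 2 → ℝ) : ℂ :=
  if 0 ≤ Q u u then (Real.sqrt (Q u u) : ℂ) else Complex.I * (Real.sqrt (-(Q u u)) : ℂ)

/-- The complex angle `θ(u) = φ - iϕ` of a non-null vector `u` with the reference vector
`e₁`: the real (hyperbolic) part `φ` is the boost parameter within the light-cone region
of `u`, and the imaginary part `ϕ ∈ {0, π/2, π, 3π/2}` records the region (R, U, L, B). -/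
def cangle (u : Fin 2 → ℝ) : ℂ :=
  if 0 < Q u u ∧ 0 < u 0 then
    (Real.arsinh (u 1 / Real.sqrt (Q u u)) : ℂ)
  else if Q u u < 0 ∧ 0 < u 1 then
    (Real.arsinh (u 0 / Real.sqrt (-(Q u u))) : ℂ) - Complex.I * (π / 2 : ℝ)
  else if 0 < Q u u then
    (Real.arsinh (-(u 1) / Real.sqrt (Q u u)) : ℂ) - Complex.I * (π : ℝ)
  else
    (Real.arsinh (-(u 0) / Real.sqrt (-(Q u u))) : ℂ) - Complex.I * (3 * π / 2 : ℝ)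

theorem cosh_sub_I' (a c : ℝ) : Complex.cosh ((a:ℂ) - Complex.I * c) =
    (Real.cosh a * Real.cos c : ℝ) - Complex.I * (Real.sinh a * Real.sin c : ℝ) := by
  have h : (a:ℂ) - Complex.I * c = (a:ℂ) + (-c:ℂ) * Complex.I := by ring
  rw [h, Complex.cosh_add, Complex.cosh_mul_I, Complex.sinh_mul_I, Complex.cos_neg,
    Complex.sin_neg]
  push_cast [← Complex.ofReal_cosh, ← Complex.ofReal_sinh, ← Complex.ofReal_cos,
    ← Complex.ofReal_sin]
  ring

theorem sinh_sub_I' (a c : ℝ) : Complex.sinh ((a:ℂ) - Complex.I * c) =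
    (Real.sinh a * Real.cos c : ℝ) - Complex.I * (Real.cosh a * Real.sin c : ℝ) := by
  have h : (a:ℂ) - Complex.I * c = (a:ℂ) + (-c:ℂ) * Complex.I := by ring
  rw [h, Complex.sinh_add, Complex.cosh_mul_I, Complex.sinh_mul_I, Complex.cos_neg,
    Complex.sin_neg]
  push_cast [← Complex.ofReal_cosh, ← Complex.ofReal_sinh, ← Complex.ofReal_cos,
    ← Complex.ofReal_sin]
  ring

theorem sqrt_one_add_aux (x b s : ℝ) (hs : 0 < s) (hb : 0 ≤ b) (h : s^2 + x^2 = b^2) :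
    Real.sqrt (1 + (x/s)^2) = b / s := by
  have h1 : 1 + (x/s)^2 = (b/s)^2 := by field_simp; linarith
  rw [h1, Real.sqrt_sq (div_nonneg hb hs.le)]

theorem cos_3pi2 : Real.cos (3 * π / 2) = 0 := by
  have : (3 * π / 2 : ℝ) = π + π / 2 := by ring
  rw [this]; simp [Real.cos_add]

theorem sin_3pi2 : Real.sin (3 * π / 2) = -1 := by
  have : (3 * π / 2 : ℝ) = π + π / 2 := by ring
  rw [this]; simp [Real.sin_add]

theorem mnorm_ne_zero (u : Fin 2 → ℝ) (h : Q u u ≠ 0) : mnorm u ≠ 0 := by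
  rw [mnorm]
  split_ifs with h'
  · exact_mod_cast Real.sqrt_ne_zero'.mpr (lt_of_le_of_ne h' (Ne.symm h))
  · push_neg at h'
    refine mul_ne_zero Complex.I_ne_zero ?_
    exact_mod_cast Real.sqrt_ne_zero'.mpr (by linarith)

theorem key (u : Fin 2 → ℝ) (h : Q u u ≠ 0) :
    Complex.cosh (cangle u) = (u 0 : ℂ) / mnorm u ∧
    Complex.sinh (cangle u) = (u 1 : ℂ) / mnorm u := by
  have hQdef : Q u u = u 0 * u 0 - u 1 * u 1 := rfl
  rcases lt_or_gt_of_ne h with hneg | hpos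
  · -- time-like
    set s := Real.sqrt (-(Q u u)) with hs_def
    have hspos : 0 < s := Real.sqrt_pos.mpr (by linarith)
    have hs2 : s ^ 2 = -(Q u u) := Real.sq_sqrt (by linarith)
    have hmn : mnorm u = Complex.I * (s : ℂ) := by rw [mnorm, if_neg (by linarith)]
    have hu1sq : s ^ 2 + u 0 ^ 2 = u 1 ^ 2 := by nlinarith
    have hu1ne : u 1 ≠ 0 := by intro h1; rw [h1] at hu1sq; nlinarith
    by_cases h1 : 0 < u 1
    · -- region U
      have hca : cangle u = (Real.arsinh (u 0 / s) : ℂ) - Complex.I * (π / 2 : ℝ) := by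
        rw [cangle, if_neg (by intro hc; linarith [hc.1]), if_pos ⟨hneg, h1⟩]
      have hcosh : Real.cosh (Real.arsinh (u 0 / s)) = u 1 / s := by
        rw [Real.cosh_arsinh, sqrt_one_add_aux (u 0) (u 1) s hspos h1.le hu1sq]
      rw [hca, cosh_sub_I', sinh_sub_I', Real.cos_pi_div_two, Real.sin_pi_div_two,
        Real.sinh_arsinh, hcosh, hmn]
      constructor
      · field_simp
        push_cast
        ring_nf
        simp [Complex.I_sq]
      · field_simp
        push_cast
        ring_nf
        simp [Complex.I_sq]
    · -- region B
      have h1' : u 1 < 0 := lt_of_le_of_ne (not_lt.mp h1) hu1ne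
      have hca : cangle u = (Real.arsinh (-(u 0) / s) : ℂ) - Complex.I * (3 * π / 2 : ℝ) := by
        rw [cangle, if_neg (by intro hc; linarith [hc.1]), if_neg (by intro hc; exact h1 hc.2),
          if_neg (by linarith)]
      have hcosh : Real.cosh (Real.arsinh (-(u 0) / s)) = -(u 1) / s := by
        rw [Real.cosh_arsinh, sqrt_one_add_aux (-(u 0)) (-(u 1)) s hspos (by linarith)
          (by nlinarith)]
      rw [hca, cosh_sub_I', sinh_sub_I', cos_3pi2, sin_3pi2, Real.sinh_arsinh, hcosh, hmn]
      constructor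
      · field_simp
        push_cast
        ring_nf
        simp [Complex.I_sq]
      · field_simp
        push_cast
        ring_nf
        simp [Complex.I_sq]
  · -- space-like
    set s := Real.sqrt (Q u u) with hs_def
    have hspos : 0 < s := Real.sqrt_pos.mpr hpos
    have hs2 : s ^ 2 = Q u u := Real.sq_sqrt hpos.le
    have hmn : mnorm u = (s : ℂ) := by rw [mnorm, if_pos hpos.le]
    have hu0sq : s ^ 2 + u 1 ^ 2 = u 0 ^ 2 := by nlinarith
    have hu0ne : u 0 ≠ 0 := by intro h0; rw [h0] at hu0sq; nlinarith
    by_cases h0 : 0 < u 0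
    · -- region R
      have hca : cangle u = (Real.arsinh (u 1 / s) : ℂ) := by
        rw [cangle, if_pos ⟨hpos, h0⟩]
      have hcosh : Real.cosh (Real.arsinh (u 1 / s)) = u 0 / s := by
        rw [Real.cosh_arsinh, sqrt_one_add_aux (u 1) (u 0) s hspos h0.le hu0sq]
      rw [hca, hmn, ← Complex.ofReal_cosh, ← Complex.ofReal_sinh, Real.sinh_arsinh, hcosh]
      constructor <;> push_cast <;> ring
    · -- region L
      have h0' : u 0 < 0 := lt_of_le_of_ne (not_lt.mp h0) hu0ne
      have hca : cangle u = (Real.arsinh (-(u 1) / s) : ℂ) - Complex.I * (π : ℝ) := by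
        rw [cangle, if_neg (by intro hc; exact h0 hc.2), if_neg (by intro hc; linarith [hc.1]),
          if_pos hpos]
      have hcosh : Real.cosh (Real.arsinh (-(u 1) / s)) = -(u 0) / s := by
        rw [Real.cosh_arsinh, sqrt_one_add_aux (-(u 1)) (-(u 0)) s hspos (by linarith)
          (by nlinarith)]
      rw [hca, cosh_sub_I', sinh_sub_I', Real.cos_pi, Real.sin_pi, Real.sinh_arsinh, hcosh, hmn]
      constructor <;> (push_cast; field_simp; try ring)

/-- Minkowskian angles `θ_{uv} := θ(v) - θ(u)` on `ℝ^{1,1}` satisfy the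
defining relation `cosh θ_{uv} = ⟨u,v⟩/(‖u‖‖v‖)` for all non-null `u`, `v`, and they are
additive: `θ_{uw} = θ_{uv} + θ_{vw}` for non-null vectors `u`, `v`, `w`. -/
theorem minkowski_angles_additive :
    (∀ u v : Fin 2 → ℝ, Q u u ≠ 0 → Q v v ≠ 0 →
      Complex.cosh (cangle v - cangle u) = (Q u v : ℂ) / (mnorm u * mnorm v)) ∧
    (∀ u v w : Fin 2 → ℝ, Q u u ≠ 0 → Q v v ≠ 0 → Q w w ≠ 0 →
      cangle w - cangle u = (cangle v - cangle u) + (cangle w - cangle v)) := by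
  constructor
  · intro u v hu hv
    obtain ⟨hcu, hsu⟩ := key u hu
    obtain ⟨hcv, hsv⟩ := key v hv
    have hmu := mnorm_ne_zero u hu
    have hmv := mnorm_ne_zero v hv
    rw [Complex.cosh_sub, hcu, hsu, hcv, hsv]
    have hQuv : (Q u v : ℂ) = (u 0 : ℂ) * v 0 - (u 1 : ℂ) * v 1 := by
      rw [show Q u v = u 0 * v 0 - u 1 * v 1 from rfl]; push_cast; ring
    rw [hQuv]
    field_simp
  · intro u v w _ _ _
    ring
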